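/- Let E be a finite-dimensional vector space over a field F and let cl be a closure function on E. Define r_cl(A) = min{ dim I : I ⊆ A, cl(I) = cl(A) } for each subspace A of E. Then r_cl satisfies the rank axioms: (R1) 0 ≤ r_cl(A) ≤ dim A for every subspace A; (R2) r_cl(A) ≤ r_cl(B) whenever A ⊆ B; (R3) r_cl(A+B) + r_cl(A∩B) ≤ r_cl(A) + r_cl(B) for all subspaces A, B. -/

import Mathlib

set_option linter.unusedSectionVars false

open Module

/-- `rCl cl A` is the minimal dimension of a subspace `I ⊆ A` with `cl I = cl A`. -/
noncomputable def rCl {K E : Type*} [Field K] [AddCommGroup E] [Module K E]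
    (cl : Submodule K E → Submodule K E) (A : Submodule K E) : ℕ :=
  sInf {n : ℕ | ∃ I : Submodule K E, I ≤ A ∧ cl I = cl A ∧ finrank K I = n}

section Aux
variable {K E : Type*} [Field K] [AddCommGroup E] [Module K E] [DecidableEq E]
variable (cl : Submodule K E → Submodule K E)

/-- closure of a finset of vectors -/
def fc (s : Finset E) : Submodule K E := cl (Submodule.span K (s : Set E))

def FIndep (s : Finset E) : Prop := ∀ v ∈ s, v ∉ fc cl (s.erase v)

variable (hCl1 : ∀ A : Submodule K E, A ≤ cl A)
variable (hCl2 : ∀ A B : Submodule K E, A ≤ B → cl A ≤ cl B)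
variable (hCl3 : ∀ A : Submodule K E, cl (cl A) = cl A)
variable (hCl4 : ∀ (A x y : Submodule K E), finrank K x = 1 → finrank K y = 1 →
      y ≤ cl (A ⊔ x) → ¬ y ≤ cl A → x ≤ cl (A ⊔ y))

include hCl1 hCl2 hCl3 hCl4

lemma span_le_fc (s : Finset E) : Submodule.span K (s : Set E) ≤ fc cl s := hCl1 _

lemma subset_fc (s : Finset E) : (s : Set E) ⊆ (fc cl s : Set E) :=
  subset_trans Submodule.subset_span (span_le_fc cl hCl1 hCl2 hCl3 hCl4 s)

lemma fc_mono {s t : Finset E} (h : s ⊆ t) : fc cl s ≤ fc cl t :=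
  hCl2 _ _ (Submodule.span_mono (by exact_mod_cast h))

lemma fc_le_of_span_le {s : Finset E} {B : Submodule K E}
    (h : Submodule.span K (s : Set E) ≤ cl B) : fc cl s ≤ cl B := by
  have := hCl2 _ _ h
  rwa [hCl3] at this

lemma fc_le_fc_of_subset_fc {s t : Finset E} (h : (s : Set E) ⊆ (fc cl t : Set E)) :
    fc cl s ≤ fc cl t :=
  fc_le_of_span_le cl hCl1 hCl2 hCl3 hCl4 (Submodule.span_le.mpr h)

/-- Exchange property derived from Cl4. -/
lemma fc_exchange {s : Finset E} {v w : E} (hv0 : v ≠ 0)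
    (hw1 : w ∈ fc cl (insert v s)) (hw2 : w ∉ fc cl s) :
    v ∈ fc cl (insert w s) := by
  have hw0 : w ≠ 0 := by rintro rfl; exact hw2 (Submodule.zero_mem _)
  have hx : finrank K (Submodule.span K ({v} : Set E)) = 1 := finrank_span_singleton hv0
  have hy : finrank K (Submodule.span K ({w} : Set E)) = 1 := finrank_span_singleton hw0
  have hsup : Submodule.span K (↑(insert v s) : Set E)
      = Submodule.span K (s : Set E) ⊔ Submodule.span K ({v} : Set E) := by
    rw [Finset.coe_insert, Submodule.span_insert, sup_comm]
  have hy1 : Submodule.span K ({w} : Set E) ≤ cl (Submodule.span K (s : Set E) ⊔ Submodule.span K ({v} : Set E)) := by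
    rw [← hsup]; exact (Submodule.span_singleton_le_iff_mem _ _).mpr hw1
  have hy2 : ¬ Submodule.span K ({w} : Set E) ≤ cl (Submodule.span K (s : Set E)) := by
    intro h; exact hw2 (h (Submodule.mem_span_singleton_self w))
  have := hCl4 (Submodule.span K (s : Set E)) _ _ hx hy hy1 hy2
  have hsup' : Submodule.span K (↑(insert w s) : Set E)
      = Submodule.span K (s : Set E) ⊔ Submodule.span K ({w} : Set E) := by
    rw [Finset.coe_insert, Submodule.span_insert, sup_comm]
  have : Submodule.span K ({v} : Set E) ≤ fc cl (insert w s) := by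
    rw [fc, hsup']; exact this
  exact this (Submodule.mem_span_singleton_self v)

lemma findep_insert {s : Finset E} {v : E} (hs : FIndep cl s) (hv : v ∉ fc cl s) :
    FIndep cl (insert v s) := by
  have hvs : v ∉ s := fun h => hv (subset_fc cl hCl1 hCl2 hCl3 hCl4 s h)
  intro u hu
  rcases Finset.mem_insert.mp hu with h | hus
  · rw [h]; rwa [Finset.erase_insert hvs]
  · have hne : u ≠ v := by rintro rfl; exact hv (subset_fc cl hCl1 hCl2 hCl3 hCl4 s hus)
    rw [Finset.erase_insert_of_ne (Ne.symm hne)]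
    intro hmem
    have hv0 : v ≠ 0 := by rintro rfl; exact hv (Submodule.zero_mem _)
    have := fc_exchange cl hCl1 hCl2 hCl3 hCl4 hv0 (s := s.erase u) (w := u) hmem (hs u hus)
    rw [Finset.insert_erase hus] at this
    exact hv this

lemma exists_max_indep : ∀ (n : ℕ) (b0 s : Finset E), b0 ⊆ s → FIndep cl b0 →
    s.card ≤ b0.card + n →
    ∃ b : Finset E, b0 ⊆ b ∧ b ⊆ s ∧ FIndep cl b ∧ (s : Set E) ⊆ (fc cl b : Set E) := by
  intro n
  induction n with
  | zero =>
    intro b0 s hsub hind hcard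
    have : b0 = s := Finset.eq_of_subset_of_card_le hsub (by simpa using hcard)
    subst this
    exact ⟨b0, subset_rfl, subset_rfl, hind, subset_fc cl hCl1 hCl2 hCl3 hCl4 b0⟩
  | succ n ih =>
    intro b0 s hsub hind hcard
    by_cases h : (s : Set E) ⊆ (fc cl b0 : Set E)
    · exact ⟨b0, subset_rfl, hsub, hind, h⟩
    · obtain ⟨v, hvs, hvb⟩ := Set.not_subset.mp h
      have hvb0 : v ∉ b0 := fun hh => hvb (subset_fc cl hCl1 hCl2 hCl3 hCl4 b0 hh)
      have hind' : FIndep cl (insert v b0) := findep_insert cl hCl1 hCl2 hCl3 hCl4 hind hvb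
      have hsub' : insert v b0 ⊆ s := Finset.insert_subset (by exact_mod_cast hvs) hsub
      have hcard' : s.card ≤ (insert v b0).card + n := by
        rw [Finset.card_insert_of_notMem hvb0]; omega
      obtain ⟨b, hb1, hb2, hb3, hb4⟩ := ih (insert v b0) s hsub' hind' hcard'
      exact ⟨b, subset_trans (Finset.subset_insert _ _) hb1, hb2, hb3, hb4⟩

lemma steinitz : ∀ (n : ℕ) (s t : Finset E), (s \ t).card ≤ n → FIndep cl s →
    (s : Set E) ⊆ (fc cl t : Set E) → s.card ≤ t.card := by
  intro n
  induction n with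
  | zero =>
    intro s t hc _ _
    have : s ⊆ t := by
      have : s \ t = ∅ := Finset.card_eq_zero.mp (Nat.le_zero.mp hc)
      intro x hx
      by_contra hxt
      exact (Finset.notMem_empty x) (this ▸ Finset.mem_sdiff.mpr ⟨hx, hxt⟩)
    exact Finset.card_le_card this
  | succ n ih =>
    intro s t hc hind hspan
    by_cases hempty : s \ t = ∅
    · refine Finset.card_le_card ?_
      intro x hx
      by_contra hxt
      exact (Finset.notMem_empty x) (hempty ▸ Finset.mem_sdiff.mpr ⟨hx, hxt⟩)
    · obtain ⟨v, hv⟩ := Finset.nonempty_iff_ne_empty.mpr hempty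
      obtain ⟨hvs, hvt⟩ := Finset.mem_sdiff.mp hv
      classical
      -- minimal u ⊆ t with v ∈ fc u
      have hU : (t.powerset.filter (fun u => v ∈ fc cl u)).Nonempty := by
        refine ⟨t, Finset.mem_filter.mpr ⟨Finset.mem_powerset_self t, hspan hvs⟩⟩
      obtain ⟨u, huU, humin⟩ := Finset.exists_min_image _ Finset.card hU
      obtain ⟨hut', hvu⟩ := Finset.mem_filter.mp huU
      have hut : u ⊆ t := Finset.mem_powerset.mp hut'
      -- find w ∈ u with w ∉ s
      have hw : ∃ w ∈ u, w ∉ s := by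
        by_contra hcon
        push_neg at hcon
        have husub : u ⊆ s.erase v := by
          intro x hx
          exact Finset.mem_erase.mpr ⟨fun h => hvt (hut (h ▸ hx)), hcon x hx⟩
        exact hind v hvs (fc_mono cl hCl1 hCl2 hCl3 hCl4 husub hvu)
      obtain ⟨w, hwu, hws⟩ := hw
      have hvuw : v ∉ fc cl (u.erase w) := by
        intro hmem
        have : u.erase w ∈ t.powerset.filter (fun u => v ∈ fc cl u) :=
          Finset.mem_filter.mpr ⟨Finset.mem_powerset.mpr (subset_trans (Finset.erase_subset _ _) hut), hmem⟩
        have := humin _ this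
        have hlt : (u.erase w).card < u.card := Finset.card_erase_lt_of_mem hwu
        omega
      have hw0 : w ≠ 0 := by
        rintro rfl
        apply hvuw
        have : (u : Set E) ⊆ (fc cl (u.erase 0) : Set E) := by
          intro x hx
          by_cases hx0 : x = 0
          · subst hx0; exact Submodule.zero_mem _
          · exact subset_fc cl hCl1 hCl2 hCl3 hCl4 _ (Finset.mem_erase.mpr ⟨hx0, hx⟩)
        exact fc_le_fc_of_subset_fc cl hCl1 hCl2 hCl3 hCl4 this hvu
      have hvu' : v ∈ fc cl (insert w (u.erase w)) := by
        rwa [Finset.insert_erase hwu]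
      have hwex : w ∈ fc cl (insert v (u.erase w)) :=
        fc_exchange cl hCl1 hCl2 hCl3 hCl4 hw0 hvu' hvuw
      set t' := insert v (t.erase w) with ht'
      have htsub : (t : Set E) ⊆ (fc cl t' : Set E) := by
        intro x hx
        by_cases hxw : x = w
        · rw [hxw]
          exact fc_mono cl hCl1 hCl2 hCl3 hCl4
            (Finset.insert_subset_insert _ (Finset.erase_subset_erase _ hut)) hwex
        · refine subset_fc cl hCl1 hCl2 hCl3 hCl4 t' ?_
          exact Finset.mem_insert_of_mem (Finset.mem_erase.mpr ⟨hxw, by exact_mod_cast hx⟩)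
      have hfc : fc cl t ≤ fc cl t' := fc_le_fc_of_subset_fc cl hCl1 hCl2 hCl3 hCl4 htsub
      have hspan' : (s : Set E) ⊆ (fc cl t' : Set E) := fun x hx => hfc (hspan hx)
      have hsd : s \ t' ⊆ (s \ t).erase v := by
        intro x hx
        obtain ⟨hxs, hxt'⟩ := Finset.mem_sdiff.mp hx
        have hxv : x ≠ v := fun h => hxt' (h ▸ Finset.mem_insert_self v _)
        have hxw : x ≠ w := fun h => hws (h ▸ hxs)
        refine Finset.mem_erase.mpr ⟨hxv, Finset.mem_sdiff.mpr ⟨hxs, fun hxt => ?_⟩⟩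
        exact hxt' (Finset.mem_insert_of_mem (Finset.mem_erase.mpr ⟨hxw, hxt⟩))
      have hcard' : (s \ t').card ≤ n := by
        have h1 : (s \ t').card ≤ ((s \ t).erase v).card := Finset.card_le_card hsd
        have h2 : ((s \ t).erase v).card = (s \ t).card - 1 := Finset.card_erase_of_mem hv
        omega
      have hct' : t'.card = t.card := by
        have hvt' : v ∉ t.erase w := fun h => hvt (Finset.erase_subset _ _ h)
        rw [ht', Finset.card_insert_of_notMem hvt', Finset.card_erase_of_mem (hut hwu)]
        have : 1 ≤ t.card := Finset.card_pos.mpr ⟨w, hut hwu⟩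
        omega
      have := ih s t' hcard' hind hspan'
      omega


/-- Every subspace has an independent finset spanning it (extending a given independent set). -/
lemma exists_basis_ext [FiniteDimensional K E] {A : Submodule K E} {b0 : Finset E}
    (hb0A : (b0 : Set E) ⊆ (A : Set E)) (hb0 : FIndep cl b0) :
    ∃ b : Finset E, b0 ⊆ b ∧ (b : Set E) ⊆ (A : Set E) ∧ FIndep cl b ∧ fc cl b = cl A := by
  obtain ⟨s, hs⟩ := (IsNoetherian.noetherian A : A.FG)
  obtain ⟨b, hb1, hb2, hb3, hb4⟩ := exists_max_indep cl hCl1 hCl2 hCl3 hCl4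
    (b0 ∪ s).card b0 (b0 ∪ s) Finset.subset_union_left hb0 (by omega)
  have hsA : (s : Set E) ⊆ (A : Set E) := hs ▸ Submodule.subset_span
  have hbsA : ((b0 ∪ s : Finset E) : Set E) ⊆ (A : Set E) := by
    rw [Finset.coe_union]; exact Set.union_subset hb0A hsA
  refine ⟨b, hb1, subset_trans (by exact_mod_cast hb2) hbsA, hb3, le_antisymm ?_ ?_⟩
  · exact fc_le_of_span_le cl hCl1 hCl2 hCl3 hCl4
      (le_trans (Submodule.span_le.mpr (subset_trans (by exact_mod_cast hb2) hbsA)) (hCl1 A))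
  · have hsfc : Submodule.span K (s : Set E) ≤ fc cl b := by
      refine Submodule.span_le.mpr (subset_trans ?_ hb4)
      exact_mod_cast (Finset.subset_union_right : s ⊆ b0 ∪ s)
    rw [← hs]
    exact fc_le_of_span_le cl hCl1 hCl2 hCl3 hCl4 (le_trans hsfc (le_of_eq rfl))

lemma rCl_eq_card [FiniteDimensional K E] {A : Submodule K E} {b : Finset E}
    (hbA : (b : Set E) ⊆ (A : Set E)) (hb : FIndep cl b) (hcb : fc cl b = cl A) :
    rCl cl A = b.card := by
  have hne : {n : ℕ | ∃ I : Submodule K E, I ≤ A ∧ cl I = cl A ∧ finrank K I = n}.Nonempty :=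
    ⟨finrank K A, A, le_refl A, rfl, rfl⟩
  refine le_antisymm ?_ ?_
  · have hmem : finrank K (Submodule.span K (b : Set E)) ∈
        {n : ℕ | ∃ I : Submodule K E, I ≤ A ∧ cl I = cl A ∧ finrank K I = n} :=
      ⟨Submodule.span K (b : Set E), Submodule.span_le.mpr hbA, hcb, rfl⟩
    exact le_trans (Nat.sInf_le hmem) (finrank_span_finset_le_card b)
  · refine le_csInf hne ?_
    rintro n ⟨I, hIA, hclI, rfl⟩
    haveI : FiniteDimensional K I := inferInstance
    set m := finrank K I
    let B := Module.finBasis K I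
    have hinj : Function.Injective (fun i : Fin m => ((B i : I) : E)) :=
      Subtype.val_injective.comp B.injective
    set t : Finset E := Finset.image (fun i : Fin m => ((B i : I) : E)) Finset.univ with ht
    have hcard : t.card = m := by
      rw [ht, Finset.card_image_of_injective _ hinj, Finset.card_univ, Fintype.card_fin]
    have hspan : Submodule.span K (t : Set E) = I := by
      rw [ht]
      push_cast [Finset.coe_image, Finset.coe_univ, Set.image_univ]
      have : Set.range (fun i : Fin m => ((B i : I) : E)) = I.subtype '' Set.range B := by
        rw [← Set.range_comp]; rfl
      rw [this, Submodule.span_image, B.span_eq, Submodule.map_top, Submodule.range_subtype]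
    have hbfc : (b : Set E) ⊆ (fc cl t : Set E) := by
      have : fc cl t = cl A := by rw [fc, hspan, hclI]
      rw [this]
      exact subset_trans hbA (hCl1 A)
    have := steinitz cl hCl1 hCl2 hCl3 hCl4 (b \ t).card b t (le_refl _) hb hbfc
    omega

end Aux


theorem stmt12 {K E : Type*} [Field K] [AddCommGroup E] [Module K E] [FiniteDimensional K E]
    (cl : Submodule K E → Submodule K E)
    (hCl1 : ∀ A : Submodule K E, A ≤ cl A)
    (hCl2 : ∀ A B : Submodule K E, A ≤ B → cl A ≤ cl B)
    (hCl3 : ∀ A : Submodule K E, cl (cl A) = cl A)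
    (hCl4 : ∀ (A x y : Submodule K E), finrank K x = 1 → finrank K y = 1 →
      y ≤ cl (A ⊔ x) → ¬ y ≤ cl A → x ≤ cl (A ⊔ y)) :
    (∀ A : Submodule K E, rCl cl A ≤ finrank K A) ∧
    (∀ A B : Submodule K E, A ≤ B → rCl cl A ≤ rCl cl B) ∧
    (∀ A B : Submodule K E, rCl cl (A ⊔ B) + rCl cl (A ⊓ B) ≤ rCl cl A + rCl cl B) := by
  classical
  have hemp : FIndep cl (∅ : Finset E) := fun v hv => absurd hv (Finset.notMem_empty v)
  refine ⟨fun A => Nat.sInf_le ⟨A, le_refl A, rfl, rfl⟩, ?_, ?_⟩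
  · intro A B hAB
    obtain ⟨bA, -, hbAA, hbAi, hbAfc⟩ := exists_basis_ext cl hCl1 hCl2 hCl3 hCl4
      (A := A) (b0 := ∅) (by simp) hemp
    obtain ⟨bB, hsub, hbBB, hbBi, hbBfc⟩ := exists_basis_ext cl hCl1 hCl2 hCl3 hCl4
      (A := B) (b0 := bA) (fun x hx => hAB (hbAA hx)) hbAi
    rw [rCl_eq_card cl hCl1 hCl2 hCl3 hCl4 hbAA hbAi hbAfc,
      rCl_eq_card cl hCl1 hCl2 hCl3 hCl4 hbBB hbBi hbBfc]
    exact Finset.card_le_card hsub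
  · intro A B
    obtain ⟨b0, -, hb0, hb0i, hb0fc⟩ := exists_basis_ext cl hCl1 hCl2 hCl3 hCl4
      (A := A ⊓ B) (b0 := ∅) (by simp) hemp
    obtain ⟨bA, hsubA, hbAA, hbAi, hbAfc⟩ := exists_basis_ext cl hCl1 hCl2 hCl3 hCl4
      (A := A) (b0 := b0) (fun x hx => (inf_le_left : A ⊓ B ≤ A) (hb0 hx)) hb0i
    obtain ⟨bB, hsubB, hbBB, hbBi, hbBfc⟩ := exists_basis_ext cl hCl1 hCl2 hCl3 hCl4
      (A := B) (b0 := b0) (fun x hx => (inf_le_right : A ⊓ B ≤ B) (hb0 hx)) hb0i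
    have h1 : rCl cl A = bA.card := rCl_eq_card cl hCl1 hCl2 hCl3 hCl4 hbAA hbAi hbAfc
    have h2 : rCl cl B = bB.card := rCl_eq_card cl hCl1 hCl2 hCl3 hCl4 hbBB hbBi hbBfc
    have h3 : rCl cl (A ⊓ B) = b0.card := rCl_eq_card cl hCl1 hCl2 hCl3 hCl4 hb0 hb0i hb0fc
    have hUsub : ((bA ∪ bB : Finset E) : Set E) ⊆ ((A ⊔ B : Submodule K E) : Set E) := by
      rw [Finset.coe_union]
      refine Set.union_subset (fun x hx => ?_) (fun x hx => ?_)
      · exact (le_sup_left : A ≤ A ⊔ B) (hbAA hx)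
      · exact (le_sup_right : B ≤ A ⊔ B) (hbBB hx)
    have hIle : Submodule.span K ((bA ∪ bB : Finset E) : Set E) ≤ A ⊔ B :=
      Submodule.span_le.mpr hUsub
    have hclI : cl (Submodule.span K ((bA ∪ bB : Finset E) : Set E)) = cl (A ⊔ B) := by
      refine le_antisymm (hCl2 _ _ hIle) ?_
      have hA : A ≤ cl (Submodule.span K ((bA ∪ bB : Finset E) : Set E)) := by
        calc A ≤ cl A := hCl1 A
        _ = fc cl bA := hbAfc.symm
        _ ≤ _ := fc_mono cl hCl1 hCl2 hCl3 hCl4 Finset.subset_union_left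
      have hB : B ≤ cl (Submodule.span K ((bA ∪ bB : Finset E) : Set E)) := by
        calc B ≤ cl B := hCl1 B
        _ = fc cl bB := hbBfc.symm
        _ ≤ _ := fc_mono cl hCl1 hCl2 hCl3 hCl4 Finset.subset_union_right
      have := hCl2 _ _ (sup_le hA hB)
      rwa [hCl3] at this
    have h4 : rCl cl (A ⊔ B) ≤ (bA ∪ bB).card := by
      refine le_trans (Nat.sInf_le ⟨Submodule.span K ((bA ∪ bB : Finset E) : Set E),
        hIle, hclI, rfl⟩) ?_
      exact finrank_span_finset_le_card _
    have h5 : b0 ⊆ bA ∩ bB := Finset.subset_inter hsubA hsubB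
    have h6 : b0.card ≤ (bA ∩ bB).card := Finset.card_le_card h5
    have h7 : (bA ∪ bB).card + (bA ∩ bB).card = bA.card + bB.card :=
      Finset.card_union_add_card_inter bA bB
    omega
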